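/- Let G be an n-vertex graph with maximum spectral radius among all {K_{k+1}, M_{s+1}}-free graphs, and let B ⊆ V(G) be a Tutte–Berge witness set (all components of G − B odd, |B| + ∑(|G_i|−1)/2 = s). Then among all such extremal graphs chosen to maximize the number of singleton components and minimize the number of neighborhood-equivalence classes in B, any two non-adjacent vertices of B have identical neighborhoods; consequently G[B] is a complete multipartite graph with at most k parts. -/

import Mathlib

open Finset

noncomputable def adjMat {V : Type*} [Fintype V] [DecidableEq V] (G : SimpleGraph V) :
    Matrix V V ℝ :=
  letI := Classical.decRel G.Adj
  G.adjMatrix ℝ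

/-- The spectral radius (largest adjacency eigenvalue) of a finite graph. -/
noncomputable def specRad {V : Type*} [Fintype V] [DecidableEq V] (G : SimpleGraph V) : ℝ :=
  sSup (spectrum ℝ (adjMat G))

/-- `G` contains no matching with `m` edges. -/
def MFree {V : Type*} (G : SimpleGraph V) (m : ℕ) : Prop :=
  ¬ ∃ M : SimpleGraph.Subgraph G, M.IsMatching ∧ M.edgeSet.ncard = m

/-- `B` is a Tutte–Berge witness for `G` with value `s`: every component of `G - B` is
odd and `|B| + ∑ (|G_i| - 1)/2 = s`. -/
def TBWitness {V : Type*} [Fintype V] (G : SimpleGraph V) (B : Set V) (s : ℕ) : Prop :=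
  (∀ c : (G.induce Bᶜ).ConnectedComponent, Odd (Nat.card c.supp)) ∧
    B.ncard + ∑ᶠ c : (G.induce Bᶜ).ConnectedComponent, (Nat.card c.supp - 1) / 2 = s

/-- The number of singleton components of `G - B`. -/
noncomputable def singCount {V : Type*} [Fintype V] (G : SimpleGraph V) (B : Set V) : ℕ :=
  Nat.card {c : (G.induce Bᶜ).ConnectedComponent // Nat.card c.supp = 1}

/-- The number of neighborhood-equivalence classes of `B` in `G`
(vertices `u, w` being equivalent iff `N_G(u) = N_G(w)`). -/
noncomputable def classCount {V : Type*} [Fintype V] (G : SimpleGraph V) (B : Set V) : ℕ :=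
  (G.neighborSet '' B).ncard

/-- An extremal configuration: `G` is `{K_{k+1}, M_{s+1}}`-free with maximum spectral
radius among all such graphs on `V`, and `B` is a Tutte–Berge witness for `G`. -/
def ExtremalPair {V : Type*} [Fintype V] [DecidableEq V]
    (G : SimpleGraph V) (B : Set V) (k s : ℕ) : Prop :=
  G.CliqueFree (k + 1) ∧ MFree G (s + 1) ∧
    (∀ G' : SimpleGraph V, G'.CliqueFree (k + 1) → MFree G' (s + 1) →
      specRad G' ≤ specRad G) ∧
    TBWitness G B s

section Helpers
open Matrix
variable {V : Type*} [Fintype V] [DecidableEq V]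


lemma adjMat_apply (G : SimpleGraph V) (i j : V) [Decidable (G.Adj i j)] :
    adjMat G i j = if G.Adj i j then 1 else 0 := by
  by_cases h : G.Adj i j <;> simp [adjMat, h]

lemma adjMat_nonneg (G : SimpleGraph V) (i j : V) : 0 ≤ adjMat G i j := by
  classical
  rw [adjMat_apply]
  split <;> norm_num

lemma adjMat_herm (G : SimpleGraph V) : (adjMat G).IsHermitian := by
  classical
  ext i j
  simp only [Matrix.conjTranspose_apply, star_trivial, adjMat_apply, G.adj_comm]

lemma spectrum_adjMat (G : SimpleGraph V) :
    spectrum ℝ (adjMat G) = Set.range (adjMat_herm G).eigenvalues :=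
  (adjMat_herm G).spectrum_real_eq_range_eigenvalues

lemma eigenvalues_le_specRad [Nonempty V] (G : SimpleGraph V) (i : V) :
    (adjMat_herm G).eigenvalues i ≤ specRad G := by
  apply le_csSup
  · exact (Matrix.finite_real_spectrum).bddAbove
  · rw [spectrum_adjMat]; exact ⟨i, rfl⟩

lemma exists_specRad_eigenvalue [Nonempty V] (G : SimpleGraph V) :
    ∃ i, (adjMat_herm G).eigenvalues i = specRad G := by
  have h1 : (spectrum ℝ (adjMat G)).Nonempty := by
    rw [spectrum_adjMat]; exact Set.range_nonempty _
  have h2 := Set.Nonempty.csSup_mem h1 (Matrix.finite_real_spectrum)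
  rw [specRad, spectrum_adjMat]
  rw [spectrum_adjMat] at h2
  exact h2

open Matrix in
lemma dot_mulVec_eq (A : Matrix V V ℝ) (x : V → ℝ) :
    x ⬝ᵥ (A *ᵥ x) = ∑ i, ∑ j, x i * (A i j * x j) := by
  simp [dotProduct, Matrix.mulVec, Finset.mul_sum]

lemma rayleigh_le [Nonempty V] (G : SimpleGraph V) (x : V → ℝ) :
    x ⬝ᵥ (adjMat G *ᵥ x) ≤ specRad G * (x ⬝ᵥ x) := by
  classical
  set A := adjMat G with hAdef
  have hA := adjMat_herm G
  set Um : Matrix V V ℝ := (hA.eigenvectorUnitary : Matrix V V ℝ) with hUm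
  set c : V → ℝ := x ᵥ* Um with hc
  have hstar : star Um *ᵥ x = c := by
    rw [hc, Matrix.star_eq_conjTranspose, ← Matrix.mulVec_transpose]
    congr 1
  have hdecomp : A = Um * (Matrix.diagonal hA.eigenvalues * star Um) := by
    have h := hA.spectral_theorem
    rw [Unitary.conjStarAlgAut_apply, mul_assoc] at h
    convert h using 4 <;> rfl
  have h1 : x ⬝ᵥ (A *ᵥ x) = ∑ j, hA.eigenvalues j * (c j * c j) := by
    rw [hdecomp, ← Matrix.mulVec_mulVec, dotProduct_mulVec, ← hc,
      ← Matrix.mulVec_mulVec, hstar]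
    simp [dotProduct, Matrix.mulVec_diagonal]
    exact Finset.sum_congr rfl fun j _ => by ring
  have h2 : c ⬝ᵥ c = x ⬝ᵥ x := by
    nth_rewrite 1 [hc]
    rw [← hstar, ← dotProduct_mulVec, Matrix.mulVec_mulVec,
      (Matrix.mem_unitaryGroup_iff).mp hA.eigenvectorUnitary.2, Matrix.one_mulVec]
  calc x ⬝ᵥ (A *ᵥ x) = ∑ j, hA.eigenvalues j * (c j * c j) := h1
    _ ≤ ∑ j, specRad G * (c j * c j) := by
        apply Finset.sum_le_sum
        intro j _
        exact mul_le_mul_of_nonneg_right (eigenvalues_le_specRad G j) (mul_self_nonneg _)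
    _ = specRad G * (c ⬝ᵥ c) := by rw [dotProduct, Finset.mul_sum]
    _ = specRad G * (x ⬝ᵥ x) := by rw [h2]

lemma exists_perron [Nonempty V] (G : SimpleGraph V) :
    ∃ y : V → ℝ, (∀ i, 0 ≤ y i) ∧ y ⬝ᵥ y = 1 ∧ specRad G ≤ y ⬝ᵥ (adjMat G *ᵥ y) := by
  classical
  obtain ⟨i0, hi0⟩ := exists_specRad_eigenvalue G
  set hA := adjMat_herm G
  set x : V → ℝ := ⇑(hA.eigenvectorBasis i0) with hxdef
  have hx : adjMat G *ᵥ x = specRad G • x := by rw [← hi0]; exact hA.mulVec_eigenvectorBasis i0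
  have hxx : x ⬝ᵥ x = 1 := by
    have hn := hA.eigenvectorBasis.orthonormal.1 i0
    have := EuclideanSpace.norm_eq (hA.eigenvectorBasis i0)
    rw [hn] at this
    have h2 : ∑ i, ‖x i‖ ^ 2 = 1 := Real.sqrt_eq_one.mp this.symm
    rw [dotProduct]
    calc ∑ i, x i * x i = ∑ i, ‖x i‖ ^ 2 := by
          apply Finset.sum_congr rfl; intro i _; rw [Real.norm_eq_abs, sq_abs]; ring
      _ = 1 := h2
  refine ⟨fun i => |x i|, fun i => abs_nonneg _, ?_, ?_⟩
  · simpa [dotProduct, abs_mul_abs_self] using hxx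
  · have h1 : x ⬝ᵥ (adjMat G *ᵥ x) = specRad G := by
      rw [hx, dotProduct_smul, hxx]; simp
    rw [← h1, dot_mulVec_eq, dot_mulVec_eq]
    apply Finset.sum_le_sum
    intro i _
    apply Finset.sum_le_sum
    intro j _
    calc x i * (adjMat G i j * x j) = adjMat G i j * (x i * x j) := by ring
      _ ≤ adjMat G i j * |x i * x j| :=
          mul_le_mul_of_nonneg_left (le_abs_self _) (adjMat_nonneg G i j)
      _ = |x i| * (adjMat G i j * |x j|) := by rw [abs_mul]; ring

lemma matching_unique_edge {V : Type*} {H : SimpleGraph V} {M : H.Subgraph}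
    (hM : M.IsMatching) {e f : Sym2 V} (he : e ∈ M.edgeSet) (hf : f ∈ M.edgeSet)
    {v : V} (hve : v ∈ e) (hvf : v ∈ f) : e = f := by
  have h1 : s(v, Sym2.Mem.other hve) = e := Sym2.other_spec hve
  have h2 : s(v, Sym2.Mem.other hvf) = f := Sym2.other_spec hvf
  rw [← h1] at he
  rw [← h2] at hf
  rw [SimpleGraph.Subgraph.mem_edgeSet] at he hf
  have hv : v ∈ M.verts := M.edge_vert he
  rw [← h1, ← h2, (hM hv).unique he hf]

set_option maxHeartbeats 1000000 in
lemma matching_bound {V : Type*} [Fintype V] (H : SimpleGraph V) (B : Set V) (s : ℕ)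
    (hodd : ∀ c : (H.induce Bᶜ).ConnectedComponent, Odd (Nat.card c.supp))
    (hsum : B.ncard + ∑ᶠ c : (H.induce Bᶜ).ConnectedComponent, (Nat.card c.supp - 1) / 2 = s) :
    MFree H (s + 1) := by
  classical
  rintro ⟨M, hM, hcard⟩
  haveI : Finite (H.induce Bᶜ).ConnectedComponent := Quot.finite _
  haveI : Fintype (H.induce Bᶜ).ConnectedComponent := Fintype.ofFinite _
  set Ef : Finset (Sym2 V) := (M.edgeSet.toFinite).toFinset with hEf
  have hmemE : ∀ e ∈ Ef, e ∈ M.edgeSet := fun e he => (M.edgeSet.toFinite).mem_toFinset.mp he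
  have hEfcard : Ef.card = s + 1 := by
    rw [← hcard, Set.ncard_eq_toFinset_card _ M.edgeSet.toFinite]
  set P : Sym2 V → Prop := fun e => ∃ v, v ∈ B ∧ v ∈ e with hP
  set EB := Ef.filter P with hEB
  set EC := Ef.filter (fun e => ¬ P e) with hEC
  have hsplit : EB.card + EC.card = s + 1 := by
    rw [hEB, hEC, Finset.card_filter_add_card_filter_not, hEfcard]
  -- bound on EB
  have hBcard : EB.card ≤ B.ncard := by
    rw [Set.ncard_eq_toFinset_card _ B.toFinite]
    apply Finset.card_le_card_of_injOn (fun e => if h : P e then h.choose else (Quot.out e).1)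
    · intro e he
      have hPe : P e := (Finset.mem_filter.mp he).2
      simp only [dif_pos hPe]
      exact (B.toFinite).mem_toFinset.mpr hPe.choose_spec.1
    · intro e1 h1 e2 h2 heq
      have hP1 : P e1 := (Finset.mem_filter.mp h1).2
      have hP2 : P e2 := (Finset.mem_filter.mp h2).2
      simp only [dif_pos hP1, dif_pos hP2] at heq
      exact matching_unique_edge hM (hmemE e1 (Finset.mem_filter.mp h1).1)
        (hmemE e2 (Finset.mem_filter.mp h2).1)
        (heq ▸ hP1.choose_spec.2) hP2.choose_spec.2
  -- edges in EC have both endpoints outside B and are edges of H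
  have hECend : ∀ e ∈ EC, ∀ v, v ∈ e → v ∈ Bᶜ := by
    intro e he v hv
    have := (Finset.mem_filter.mp he).2
    exact fun hvB => this ⟨v, hvB, hv⟩
  have hECedge : ∀ e ∈ EC, e ∈ H.edgeSet :=
    fun e he => M.edgeSet_subset (hmemE e (Finset.mem_filter.mp he).1)
  by_cases hne : Nonempty (H.induce Bᶜ).ConnectedComponent
  · haveI : Nonempty (H.induce Bᶜ).ConnectedComponent := hne
    set ψ : Sym2 V → (H.induce Bᶜ).ConnectedComponent := fun e =>
      if h : ∃ a, ∃ _ : a ∈ Bᶜ, a ∈ e then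
        (H.induce Bᶜ).connectedComponentMk ⟨h.choose, h.choose_spec.choose⟩
      else Classical.arbitrary _ with hψ
    have hsupp : ∀ e ∈ EC, ∀ a, ∀ haB : a ∈ Bᶜ, a ∈ e →
        (⟨a, haB⟩ : ↥Bᶜ) ∈ (ψ e).supp := by
      intro e he a haB hae
      have hex : ∃ a, ∃ _ : a ∈ Bᶜ, a ∈ e := ⟨a, haB, hae⟩
      rw [hψ]
      simp only [dif_pos hex]
      rw [SimpleGraph.ConnectedComponent.mem_supp_iff]
      set a0 := hex.choose with ha0
      have ha0e : a0 ∈ e := hex.choose_spec.choose_spec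
      by_cases hcase : a = a0
      · congr 1
        exact Subtype.ext hcase
      · apply SimpleGraph.ConnectedComponent.sound
        apply SimpleGraph.Adj.reachable
        have : H.Adj a a0 := by
          have h1 : s(a, Sym2.Mem.other hae) = e := Sym2.other_spec hae
          have ha0' : a0 ∈ s(a, Sym2.Mem.other hae) := by rw [h1]; exact ha0e
          rcases Sym2.mem_iff.mp ha0' with h | h
          · exact absurd h.symm hcase
          · have := hECedge e he
            rw [← h1, SimpleGraph.mem_edgeSet] at this
            exact h ▸ this
        exact this
    have hfiber : EC.card = ∑ c, (EC.filter (fun e => ψ e = c)).card :=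
      Finset.card_eq_sum_card_fiberwise (fun e _ => Finset.mem_univ _)
    have hTc : ∀ c : (H.induce Bᶜ).ConnectedComponent,
        (EC.filter (fun e => ψ e = c)).card ≤ (Nat.card c.supp - 1) / 2 := by
      intro c
      set Tc := EC.filter (fun e => ψ e = c) with hTcdef
      set Sc : Finset V := ((Subtype.val '' c.supp).toFinite).toFinset with hSc
      have hSccard : Sc.card = Nat.card c.supp := by
        rw [hSc, ← Set.ncard_eq_toFinset_card _]
        rw [Set.ncard_image_of_injective _ Subtype.val_injective, ← Nat.card_coe_set_eq]
      have hinj : 2 * Tc.card ≤ Sc.card := by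
        have := Finset.card_le_card_of_injOn
          (f := fun p : Sym2 V × Bool => if p.2 then (Quot.out p.1).1 else (Quot.out p.1).2)
          (s := Tc ×ˢ Finset.univ) (t := Sc) ?_ ?_
        · simpa [Finset.card_product, mul_comm] using this
        · rintro ⟨e, b⟩ hp
          have heTc : e ∈ Tc := (Finset.mem_product.mp hp).1
          have heEC : e ∈ EC := (Finset.mem_filter.mp heTc).1
          have hψe : ψ e = c := (Finset.mem_filter.mp heTc).2
          have hva : (if b then (Quot.out e).1 else (Quot.out e).2) ∈ e := by
            cases b <;> simp [Sym2.out_fst_mem, Sym2.out_snd_mem]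
          have hvB := hECend e heEC _ hva
          have := hsupp e heEC _ hvB hva
          rw [hψe] at this
          rw [hSc, Finset.mem_coe, Set.Finite.mem_toFinset]
          exact ⟨_, this, rfl⟩
        · rintro ⟨e1, b1⟩ hp1 ⟨e2, b2⟩ hp2 heq
          simp only at heq
          have he1 : e1 ∈ EC := (Finset.mem_filter.mp (Finset.mem_product.mp hp1).1).1
          have he2 : e2 ∈ EC := (Finset.mem_filter.mp (Finset.mem_product.mp hp2).1).1
          have hv1 : (if b1 then (Quot.out e1).1 else (Quot.out e1).2) ∈ e1 := by
            cases b1 <;> simp [Sym2.out_fst_mem, Sym2.out_snd_mem]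
          have hv2 : (if b2 then (Quot.out e2).1 else (Quot.out e2).2) ∈ e2 := by
            cases b2 <;> simp [Sym2.out_fst_mem, Sym2.out_snd_mem]
          have hee : e1 = e2 := matching_unique_edge hM
            (hmemE e1 (Finset.mem_filter.mp he1).1) (hmemE e2 (Finset.mem_filter.mp he2).1)
            hv1 (heq ▸ hv2)
          subst hee
          have hnd : ¬ e1.IsDiag := SimpleGraph.not_isDiag_of_mem_edgeSet H (hECedge e1 he1)
          have hb : b1 = b2 := by
            by_contra hbb
            apply hnd
            have : (Quot.out e1).1 = (Quot.out e1).2 := by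
              cases b1 <;> cases b2
              · exact absurd rfl hbb
              · exact heq.symm
              · exact heq
              · exact absurd rfl hbb
            rw [← Quot.out_eq e1]
            exact Sym2.mk_isDiag_iff.mpr this
          rw [hb]
      obtain ⟨m, hm⟩ := hodd c
      rw [hSccard] at hinj
      omega
    have hCsum : EC.card ≤ ∑ᶠ c : (H.induce Bᶜ).ConnectedComponent, (Nat.card c.supp - 1) / 2 := by
      rw [finsum_eq_sum_of_fintype, hfiber]
      exact Finset.sum_le_sum fun c _ => hTc c
    omega
  · have hECempty : EC = ∅ := by
      rw [Finset.eq_empty_iff_forall_notMem]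
      intro e he
      exact hne ⟨(H.induce Bᶜ).connectedComponentMk
        ⟨(Quot.out e).1, hECend e he _ (Sym2.out_fst_mem e)⟩⟩
    rw [hECempty, Finset.card_empty] at hsplit
    have : B.ncard ≤ s := le_of_le_of_eq (Nat.le_add_right _ _) hsum
    omega

variable {V : Type*} [Fintype V] [DecidableEq V]

def rewire (G : SimpleGraph V) (U : Set V) (w : V) : SimpleGraph V where
  Adj a b := (a ∉ U ∧ b ∉ U ∧ G.Adj a b) ∨ (a ∈ U ∧ b ∉ U ∧ G.Adj w b) ∨
    (b ∈ U ∧ a ∉ U ∧ G.Adj w a)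
  symm := by constructor; intro a b h; tauto
  loopless := by
    constructor; intro a h
    rcases h with ⟨_, _, h⟩ | ⟨h1, h2, _⟩ | ⟨h1, h2, _⟩
    · exact G.loopless.irrefl a h
    · exact h2 h1
    · exact h2 h1

lemma key (k s : ℕ) (G : SimpleGraph V) (B : Set V)
    (hext : ExtremalPair G B k s)
    (hminClass : ∀ (G' : SimpleGraph V) (B' : Set V), ExtremalPair G' B' k s →
      singCount G' B' = singCount G B → classCount G B ≤ classCount G' B')
    (u w : V) (hu : u ∈ B) (hw : w ∈ B) (hadj : ¬ G.Adj u w)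
    (hN : G.neighborSet u ≠ G.neighborSet w)
    (y : V → ℝ) (hy0 : ∀ i, 0 ≤ y i) (hy1 : y ⬝ᵥ y = 1)
    (hyR : specRad G ≤ y ⬝ᵥ (adjMat G *ᵥ y))
    (hle : (adjMat G *ᵥ y) u ≤ (adjMat G *ᵥ y) w) : False := by
  classical
  obtain ⟨hK, hMf, hmax, hTB⟩ := hext
  haveI : Nonempty V := ⟨u⟩
  set U : Set V := {v | v ∈ B ∧ G.neighborSet v = G.neighborSet u} with hUdef
  have hUu : u ∈ U := ⟨hu, rfl⟩
  have hUB : ∀ v ∈ U, v ∈ B := fun v hv => hv.1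
  have hUadj : ∀ v ∈ U, ∀ z, G.Adj v z ↔ G.Adj u z := by
    intro v hv z
    constructor
    · intro h; have h2 : z ∈ G.neighborSet v := h; rwa [hv.2] at h2
    · intro h
      have h2 : z ∈ G.neighborSet v := by rw [hv.2]; exact h
      exact h2
  have hUw : w ∉ U := fun hvw => hN hvw.2.symm
  have hwU : ∀ v ∈ U, ¬ G.Adj w v := by
    intro v hv h
    exact hadj ((hUadj v hv w).mp h.symm)
  have hUU : ∀ v ∈ U, ∀ v' ∈ U, ¬ G.Adj v v' := by
    intro v hv v' hv' h
    exact G.loopless.irrefl u ((hUadj v' hv' u).mp ((hUadj v hv v').mp h).symm)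
  set G' := rewire G U w with hG'
  have r1 : ∀ a b, a ∉ U → b ∉ U → (G'.Adj a b ↔ G.Adj a b) := by
    intro a b ha hb
    constructor
    · rintro (⟨_, _, h⟩ | ⟨h1, _, _⟩ | ⟨h1, _, _⟩)
      · exact h
      · exact absurd h1 ha
      · exact absurd h1 hb
    · intro h; exact Or.inl ⟨ha, hb, h⟩
  have r2 : ∀ v ∈ U, ∀ z, (G'.Adj v z ↔ G.Adj w z) := by
    intro v hv z
    constructor
    · rintro (⟨h1, _, _⟩ | ⟨_, _, h⟩ | ⟨h1, h2, _⟩)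
      · exact absurd hv h1
      · exact h
      · exact absurd hv h2
    · intro h
      exact Or.inr (Or.inl ⟨hv, fun hzU => hwU z hzU h, h⟩)
  have r3 : ∀ v, v ∉ U → ∀ z ∈ U, (G'.Adj v z ↔ G.Adj w v) := by
    intro v hv z hz
    constructor
    · rintro (⟨_, h1, _⟩ | ⟨h1, _, _⟩ | ⟨_, _, h⟩)
      · exact absurd hz h1
      · exact absurd h1 hv
      · exact h
    · intro h; exact Or.inr (Or.inr ⟨hz, hv, h⟩)
  -- induced graphs on Bᶜ agree
  have hind : G'.induce Bᶜ = G.induce Bᶜ := by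
    ext ⟨a, ha⟩ ⟨b, hb⟩
    exact r1 a b (fun hA => ha (hUB a hA)) (fun hA => hb (hUB b hA))
  -- clique-freeness
  have hK' : G'.CliqueFree (k + 1) := by
    intro t ht
    by_cases hUt : ∃ v ∈ t, v ∈ U
    · obtain ⟨v, hvt, hvU⟩ := hUt
      have hz : ∀ z ∈ t.erase v, z ∉ U ∧ G.Adj w z := by
        intro z hzr
        have hzt := Finset.mem_of_mem_erase hzr
        have hzv : z ≠ v := Finset.ne_of_mem_erase hzr
        have hadj' : G'.Adj v z := ht.1 hvt hzt (Ne.symm hzv)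
        have hGwz : G.Adj w z := (r2 v hvU z).mp hadj'
        exact ⟨fun hzU => hwU z hzU hGwz, hGwz⟩
      have hwt : w ∉ t.erase v := by
        intro hwr
        exact G.loopless.irrefl w (hz w hwr).2
      refine hK (insert w (t.erase v)) ⟨?_, ?_⟩
      · intro a ha b hb hne
        simp only [Finset.coe_insert, Set.mem_insert_iff, Finset.mem_coe] at ha hb
        rcases ha with rfl | ha <;> rcases hb with rfl | hb
        · exact absurd rfl hne
        · exact (hz b hb).2
        · exact ((hz a ha).2).symm
        · have h' : G'.Adj a b := ht.1 (Finset.mem_of_mem_erase ha) (Finset.mem_of_mem_erase hb) hne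
          exact (r1 a b (hz a ha).1 (hz b hb).1).mp h'
      · rw [Finset.card_insert_of_notMem hwt, Finset.card_erase_of_mem hvt, ht.2]
        omega
    · push_neg at hUt
      refine hK t ⟨?_, ht.2⟩
      intro a ha b hb hne
      exact (r1 a b (hUt a ha) (hUt b hb)).mp (ht.1 ha hb hne)
  -- Tutte–Berge witness transfers
  have hTB' : TBWitness G' B s := by
    unfold TBWitness
    rw [hind]
    exact hTB
  have hMf' : MFree G' (s + 1) := matching_bound G' B s hTB'.1 hTB'.2
  -- spectral comparison
  set χ : V → ℝ := fun i => if i ∈ U then (1 : ℝ) else 0 with hχ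
  set d : V → ℝ := fun z => adjMat G w z - adjMat G u z with hd
  have hent : ∀ (G₁ G₂ : SimpleGraph V) (i j a b : V), (G₁.Adj i j ↔ G₂.Adj a b) →
      adjMat G₁ i j = adjMat G₂ a b := by
    intro G₁ G₂ i j a b h
    rw [adjMat_apply, adjMat_apply]
    exact if_congr h rfl rfl
  have hzero : ∀ (G₁ : SimpleGraph V) (i j : V), ¬ G₁.Adj i j → adjMat G₁ i j = 0 := by
    intro G₁ i j h
    rw [adjMat_apply, if_neg h]
  have hentry : ∀ i j, adjMat G' i j = adjMat G i j + χ i * d j + χ j * d i := by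
    intro i j
    by_cases hiU : i ∈ U <;> by_cases hjU : j ∈ U <;>
      simp only [hχ, hd, if_pos, if_neg, hiU, hjU, if_true, if_false]
    · rw [hzero G' i j (fun h => hwU j hjU ((r2 i hiU j).mp h)),
        hzero G i j (hUU i hiU j hjU), hzero G w j (hwU j hjU), hzero G w i (hwU i hiU),
        hzero G u j (hUU u hUu j hjU), hzero G u i (hUU u hUu i hiU)]
      ring
    · rw [hent G' G i j w j (r2 i hiU j), hent G G i j u j (hUadj i hiU j),
        hzero G w i (hwU i hiU), hzero G u i (hUU u hUu i hiU)]
      ring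
    · rw [hent G' G i j w i (r3 i hiU j hjU), hent G G i j u i
        (by rw [G.adj_comm]; exact hUadj j hjU i),
        hzero G w j (hwU j hjU), hzero G u j (hUU u hUu j hjU)]
      ring
    · rw [hent G' G i j i j (r1 i j hiU hjU)]
      ring
  have hqf : y ⬝ᵥ (adjMat G' *ᵥ y) =
      y ⬝ᵥ (adjMat G *ᵥ y) + 2 * ((∑ i, χ i * y i) * (∑ j, d j * y j)) := by
    rw [dot_mulVec_eq, dot_mulVec_eq]
    have hterm : ∀ i j, y i * (adjMat G' i j * y j) =
        y i * (adjMat G i j * y j) + (χ i * y i) * (d j * y j) + (χ j * y j) * (d i * y i) := by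
      intro i j
      rw [hentry i j]
      ring
    calc ∑ i, ∑ j, y i * (adjMat G' i j * y j)
        = ∑ i, ∑ j, (y i * (adjMat G i j * y j) + (χ i * y i) * (d j * y j)
            + (χ j * y j) * (d i * y i)) := by
          exact Finset.sum_congr rfl fun i _ => Finset.sum_congr rfl fun j _ => hterm i j
      _ = (∑ i, ∑ j, y i * (adjMat G i j * y j)) + (∑ i, ∑ j, (χ i * y i) * (d j * y j))
            + (∑ i, ∑ j, (χ j * y j) * (d i * y i)) := by
          rw [← Finset.sum_add_distrib, ← Finset.sum_add_distrib]
          exact Finset.sum_congr rfl fun i _ => by rw [← Finset.sum_add_distrib, ← Finset.sum_add_distrib]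
      _ = (∑ i, ∑ j, y i * (adjMat G i j * y j))
            + 2 * ((∑ i, χ i * y i) * (∑ j, d j * y j)) := by
          have hT2 : ∑ i, ∑ j, (χ i * y i) * (d j * y j)
              = (∑ i, χ i * y i) * (∑ j, d j * y j) :=
            (Finset.sum_mul_sum _ _ _ _).symm
          have hT3 : ∑ i, ∑ j, (χ j * y j) * (d i * y i)
              = (∑ i, d i * y i) * (∑ j, χ j * y j) := by
            calc ∑ i, ∑ j, (χ j * y j) * (d i * y i)
                = ∑ i, ∑ j, (d i * y i) * (χ j * y j) :=
                  Finset.sum_congr rfl fun i _ => Finset.sum_congr rfl fun j _ => mul_comm _ _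
              _ = (∑ i, d i * y i) * (∑ j, χ j * y j) := (Finset.sum_mul_sum _ _ _ _).symm
          rw [hT2, hT3]
          ring
  have hδ : ∑ j, d j * y j = (adjMat G *ᵥ y) w - (adjMat G *ᵥ y) u := by
    simp only [hd, Matrix.mulVec, dotProduct, sub_mul, Finset.sum_sub_distrib]
  have hσ : 0 ≤ ∑ i, χ i * y i :=
    Finset.sum_nonneg fun i _ => mul_nonneg (by rw [hχ]; dsimp only; split <;> norm_num) (hy0 i)
  have hmono : y ⬝ᵥ (adjMat G *ᵥ y) ≤ y ⬝ᵥ (adjMat G' *ᵥ y) := by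
    rw [hqf]
    have hδ0 : 0 ≤ ∑ j, d j * y j := by rw [hδ]; linarith
    nlinarith [mul_nonneg hσ hδ0]
  have hspec : specRad G ≤ specRad G' := by
    calc specRad G ≤ y ⬝ᵥ (adjMat G *ᵥ y) := hyR
      _ ≤ y ⬝ᵥ (adjMat G' *ᵥ y) := hmono
      _ ≤ specRad G' * (y ⬝ᵥ y) := rayleigh_le G' y
      _ = specRad G' := by rw [hy1, mul_one]
  have hext' : ExtremalPair G' B k s :=
    ⟨hK', hMf', fun G'' h1 h2 => le_trans (hmax G'' h1 h2) hspec, hTB'⟩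
  have hsing : singCount G' B = singCount G B := by
    unfold singCount
    rw [hind]
  -- classCount decreases
  set g : Set V → Set V := fun S => if w ∈ S then S ∪ U else S \ U with hg
  have hnbrU : ∀ v ∈ U, G'.neighborSet v = G.neighborSet w := by
    intro v hv; ext z; exact r2 v hv z
  have hnbr : ∀ v, v ∉ U → G'.neighborSet v = g (G.neighborSet v) := by
    intro v hv
    ext z
    by_cases hzU : z ∈ U
    · have h1 : (z ∈ G'.neighborSet v) ↔ G.Adj w v := r3 v hv z hzU
      by_cases hwv : w ∈ G.neighborSet v
      · have h2 : G.Adj w v := (G.adj_comm v w).mp hwv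
        simp only [hg, if_pos hwv, Set.mem_union]
        exact ⟨fun _ => Or.inr hzU, fun _ => h1.mpr h2⟩
      · have h2 : ¬ G.Adj w v := fun h => hwv ((G.adj_comm w v).mp h)
        simp only [hg, if_neg hwv, Set.mem_diff]
        exact ⟨fun h => absurd (h1.mp h) h2, fun h => absurd hzU h.2⟩
    · have h1 : (z ∈ G'.neighborSet v) ↔ G.Adj v z := r1 v z hv hzU
      by_cases hwv : w ∈ G.neighborSet v
      · simp only [hg, if_pos hwv, Set.mem_union]
        refine ⟨fun h => Or.inl (h1.mp h), ?_⟩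
        rintro (h | h)
        · exact h1.mpr h
        · exact absurd h hzU
      · simp only [hg, if_neg hwv, Set.mem_diff]
        exact ⟨fun h => ⟨h1.mp h, hzU⟩, fun h => h1.mpr h.1⟩
  have hgNw : g (G.neighborSet w) = G.neighborSet w := by
    have hnw : w ∉ G.neighborSet w := fun h => G.loopless.irrefl w h
    rw [hg]
    dsimp only
    rw [if_neg hnw]
    ext z
    simp only [Set.mem_diff]
    exact ⟨fun h => h.1, fun h => ⟨h, fun hzU => hwU z hzU h⟩⟩
  have himg : G'.neighborSet '' B = (fun v => g (G.neighborSet v)) '' (B \ U) := by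
    apply Set.eq_of_subset_of_subset
    · rintro S ⟨v, hvB, rfl⟩
      by_cases hvU : v ∈ U
      · refine ⟨w, ⟨hw, hUw⟩, ?_⟩
        show g (G.neighborSet w) = G'.neighborSet v
        rw [hgNw, hnbrU v hvU]
      · exact ⟨v, ⟨hvB, hvU⟩, (hnbr v hvU).symm⟩
    · rintro S ⟨v, ⟨hvB, hvU⟩, rfl⟩
      exact ⟨v, hvB, hnbr v hvU⟩
  have hclassle : classCount G' B ≤ (G.neighborSet '' (B \ U)).ncard := by
    rw [classCount, himg]
    have himg2 : (fun v => g (G.neighborSet v)) '' (B \ U)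
        = g '' (G.neighborSet '' (B \ U)) := by
      rw [← Set.image_comp]
      rfl
    rw [himg2]
    exact Set.ncard_image_le (Set.toFinite _)
  have hNB : G.neighborSet '' B = insert (G.neighborSet u) (G.neighborSet '' (B \ U)) := by
    apply Set.eq_of_subset_of_subset
    · rintro S ⟨v, hvB, rfl⟩
      by_cases hvU : v ∈ U
      · exact Set.mem_insert_iff.mpr (Or.inl hvU.2)
      · exact Set.mem_insert_iff.mpr (Or.inr ⟨v, ⟨hvB, hvU⟩, rfl⟩)
    · intro S hS
      rcases Set.mem_insert_iff.mp hS with rfl | ⟨v, ⟨hvB, _⟩, rfl⟩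
      · exact ⟨u, hu, rfl⟩
      · exact ⟨v, hvB, rfl⟩
  have hnotmem : G.neighborSet u ∉ G.neighborSet '' (B \ U) := by
    rintro ⟨v, ⟨hvB, hvU⟩, heq⟩
    exact hvU ⟨hvB, heq⟩
  have hcount : classCount G B = (G.neighborSet '' (B \ U)).ncard + 1 := by
    rw [classCount, hNB, Set.ncard_insert_of_notMem hnotmem (Set.toFinite _)]
  have hfin := hminClass G' B hext' hsing
  omega

end Helpers

/-- Claim 1 of the paper: if, among all extremal pairs, `(G, B)` maximizes the number of
singleton components of `G - B` and, subject to that, minimizes the number of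
neighborhood-equivalence classes of `B`, then any two non-adjacent vertices of `B` have
identical neighborhoods; consequently `G[B]` is complete multipartite with at most `k`
parts (non-adjacency within `B` is transitive, and `B` contains no clique of `k + 1`
vertices). -/
theorem extremal_nonadj_same_neighborhood {V : Type*} [Fintype V] [DecidableEq V]
    (k s : ℕ) (G : SimpleGraph V) (B : Set V)
    (hext : ExtremalPair G B k s)
    (hmaxSing : ∀ (G' : SimpleGraph V) (B' : Set V), ExtremalPair G' B' k s →
      singCount G' B' ≤ singCount G B)
    (hminClass : ∀ (G' : SimpleGraph V) (B' : Set V), ExtremalPair G' B' k s →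
      singCount G' B' = singCount G B → classCount G B ≤ classCount G' B') :
    (∀ u ∈ B, ∀ w ∈ B, ¬ G.Adj u w → G.neighborSet u = G.neighborSet w) ∧
    (∀ u ∈ B, ∀ v ∈ B, ∀ w ∈ B, ¬ G.Adj u v → ¬ G.Adj v w → ¬ G.Adj u w) ∧
    (∀ t : Finset V, ↑t ⊆ B → G.IsClique ↑t → t.card ≤ k) := by
  classical
  have part1 : ∀ u ∈ B, ∀ w ∈ B, ¬ G.Adj u w → G.neighborSet u = G.neighborSet w := by
    intro u hu w hw hnadj
    by_contra hN
    haveI : Nonempty V := ⟨u⟩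
    obtain ⟨y, hy0, hy1, hyR⟩ := exists_perron G
    rcases le_total ((Matrix.mulVec (adjMat G) y) u) ((Matrix.mulVec (adjMat G) y) w) with hle | hle
    · exact key k s G B hext hminClass u w hu hw hnadj hN y hy0 hy1 hyR hle
    · exact key k s G B hext hminClass w u hw hu (fun h => hnadj h.symm) (Ne.symm hN)
        y hy0 hy1 hyR hle
  refine ⟨part1, ?_, ?_⟩
  · intro u hu v hv w hw huv hvw hadj
    have h1 := part1 u hu v hv huv
    have h2 := part1 v hv w hw hvw
    have hmem : w ∈ G.neighborSet u := hadj
    rw [h1, h2] at hmem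
    exact G.loopless.irrefl w hmem
  · intro t ht hclique
    by_contra hcard
    push_neg at hcard
    obtain ⟨t', ht', hc⟩ := Finset.exists_subset_card_eq hcard
    exact hext.1 t' ⟨hclique.subset (Finset.coe_subset.mpr ht'), hc⟩
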